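/- For every r ≥ 2 there is a constant c_r > 0 such that for all k ≥ 2 and 1 ≤ s ≤ k^r: if n ≤ c_r · (k^r/s)^{1/(r-1)}, then every n-partite r-uniform hypergraph with parts of size k in which any r parts induce exactly s edges forming a matching has an independent transversal. In other words, f(k,r,s) = Ω_r((k^r/s)^{1/(r-1)}). -/

import Mathlib

open Finset

section LLL

variable {n k : ℕ}

private def vbl (e : Finset (Fin n × Fin k)) : Finset (Fin n) := e.image Prod.fst

private def Bad (e : Finset (Fin n × Fin k)) (f : Fin n → Fin k) : Prop :=
  ∀ v ∈ e, f v.1 = v.2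

private instance (e : Finset (Fin n × Fin k)) (f : Fin n → Fin k) : Decidable (Bad e f) := by
  unfold Bad; infer_instance

private def avoid (F : Finset (Finset (Fin n × Fin k))) : Finset (Fin n → Fin k) :=
  univ.filter fun f => ∀ e ∈ F, ¬ Bad e f

private lemma mem_vbl {e : Finset (Fin n × Fin k)} {i : Fin n} :
    i ∈ vbl e ↔ ∃ j, (i, j) ∈ e := by
  constructor
  · intro hi
    obtain ⟨v, hv, hvi⟩ := Finset.mem_image.1 hi
    exact ⟨v.2, by rw [← hvi]; exact hv⟩
  · rintro ⟨j, hj⟩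
    exact Finset.mem_image.2 ⟨(i, j), hj, rfl⟩

private lemma mem_avoid {F : Finset (Finset (Fin n × Fin k))} {f : Fin n → Fin k} :
    f ∈ avoid F ↔ ∀ e ∈ F, ¬ Bad e f := by
  simp [avoid]

private lemma avoid_anti {F G : Finset (Finset (Fin n × Fin k))} (h : F ⊆ G) :
    avoid G ⊆ avoid F := by
  intro f hf
  exact mem_avoid.2 fun e he => mem_avoid.1 hf e (h he)

private lemma avoid_insert (e : Finset (Fin n × Fin k)) (F : Finset (Finset (Fin n × Fin k))) :
    avoid (insert e F) = (avoid F).filter (fun f => ¬ Bad e f) := by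
  ext f
  simp only [avoid, mem_filter, mem_univ, true_and, mem_insert]
  constructor
  · intro h
    exact ⟨fun e' he' => h e' (Or.inr he'), h e (Or.inl rfl)⟩
  · rintro ⟨h1, h2⟩ e' (rfl | he')
    · exact h2
    · exact h1 e' he'

private lemma avoid_split (e : Finset (Fin n × Fin k)) (F : Finset (Finset (Fin n × Fin k))) :
    ((avoid F).filter (Bad e)).card + (avoid (insert e F)).card = (avoid F).card := by
  rw [avoid_insert]
  exact Finset.card_filter_add_card_filter_not _

private lemma card_avoid_empty : (avoid (∅ : Finset (Finset (Fin n × Fin k)))).card = k ^ n := by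
  have : avoid (∅ : Finset (Finset (Fin n × Fin k))) = univ := by
    ext f; simp [mem_avoid]
  rw [this, card_univ, Fintype.card_fun, Fintype.card_fin, Fintype.card_fin]

end LLL

private lemma step2 {n k : ℕ} (e : Finset (Fin n × Fin k))
    (hpart : ∀ i : Fin n, (e.filter (fun v => v.1 = i)).card ≤ 1)
    (M : Finset (Finset (Fin n × Fin k)))
    (hM : ∀ e' ∈ M, Disjoint (vbl e') (vbl e)) :
    k ^ (vbl e).card * ((avoid M).filter (Bad e)).card ≤ (avoid M).card := by
  classical
  have huniq : ∀ (i : Fin n) (j j' : Fin k), (i, j) ∈ e → (i, j') ∈ e → j = j' := by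
    intro i j j' hj hj'
    have h1 : (i, j) ∈ e.filter (fun v => v.1 = i) := Finset.mem_filter.2 ⟨hj, rfl⟩
    have h2 : (i, j') ∈ e.filter (fun v => v.1 = i) := Finset.mem_filter.2 ⟨hj', rfl⟩
    have := Finset.card_le_one.1 (hpart i) _ h1 _ h2
    exact congrArg Prod.snd this
  set θ : (Fin n → Fin k) → (Fin n → Fin k) :=
    fun f i => if h : ∃ j, (i, j) ∈ e then h.choose else f i with hθdef
  have hθ_off : ∀ (f : Fin n → Fin k) (i : Fin n), i ∉ vbl e → θ f i = f i := by
    intro f i hi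
    have : ¬ ∃ j, (i, j) ∈ e := fun h => hi (mem_vbl.2 h)
    simp only [hθdef]
    rw [dif_neg this]
  have hθ_on : ∀ (f : Fin n → Fin k) (i : Fin n) (j : Fin k), (i, j) ∈ e → θ f i = j := by
    intro f i j hj
    have hex : ∃ j', (i, j') ∈ e := ⟨j, hj⟩
    simp only [hθdef]
    rw [dif_pos hex]
    exact huniq i _ j hex.choose_spec hj
  -- agreement off `vbl e` preserves badness for edges in M
  have badcongr : ∀ e' ∈ M, ∀ f g : Fin n → Fin k,
      (∀ i, i ∉ vbl e → f i = g i) → Bad e' f → Bad e' g := by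
    intro e' he' f g hfg hb v hv
    have hv1 : v.1 ∉ vbl e := by
      intro hmem
      have hv1' : v.1 ∈ vbl e' := Finset.mem_image.2 ⟨v, hv, rfl⟩
      exact (Finset.disjoint_left.1 (hM e' he')) hv1' hmem
    rw [← hfg v.1 hv1]
    exact hb v hv
  have hmaps : ∀ f ∈ avoid M, θ f ∈ (avoid M).filter (Bad e) := by
    intro f hf
    refine Finset.mem_filter.2 ⟨?_, fun v hv => hθ_on f v.1 v.2 hv⟩
    refine mem_avoid.2 fun e' he' hb => mem_avoid.1 hf e' he' ?_
    exact badcongr e' he' (θ f) f (fun i hi => hθ_off f i hi) hb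
  refine Finset.mul_card_image_le_card_of_maps_to hmaps _ ?_
  intro f₀ hf₀
  obtain ⟨hf₀M, hf₀bad⟩ := Finset.mem_filter.1 hf₀
  set S₀ : Finset (Fin n → Fin k) :=
    univ.filter (fun g => ∀ i, i ∉ vbl e → g i = f₀ i) with hS₀def
  have hsub : S₀ ⊆ (avoid M).filter (fun g => θ g = f₀) := by
    intro g hg
    have hag : ∀ i, i ∉ vbl e → g i = f₀ i := (Finset.mem_filter.1 hg).2
    refine Finset.mem_filter.2 ⟨?_, ?_⟩
    · refine mem_avoid.2 fun e' he' hb => mem_avoid.1 hf₀M e' he' ?_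
      exact badcongr e' he' g f₀ hag hb
    · funext i
      by_cases hi : i ∈ vbl e
      · obtain ⟨j, hj⟩ := mem_vbl.1 hi
        rw [hθ_on g i j hj]
        exact (hf₀bad (i, j) hj).symm
      · rw [hθ_off g i hi]
        exact hag i hi
  have hcardS₀ : S₀.card = k ^ (vbl e).card := by
    have hbij : S₀.card = Fintype.card ({ x // x ∈ vbl e } → Fin k) := by
      rw [← Finset.card_univ]
      refine Finset.card_bij' (fun g _ => fun x : { x // x ∈ vbl e } => g x.1)
        (fun h _ => fun i => if hi : i ∈ vbl e then h ⟨i, hi⟩ else f₀ i)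
        (fun a ha => mem_univ _) ?_ ?_ ?_
      · intro h hh
        refine Finset.mem_filter.2 ⟨mem_univ _, fun i hi => ?_⟩
        dsimp only
        rw [dif_neg hi]
      · intro g hg
        funext i
        dsimp only
        by_cases hi : i ∈ vbl e
        · rw [dif_pos hi]
        · rw [dif_neg hi]
          exact ((Finset.mem_filter.1 hg).2 i hi).symm
      · intro h hh
        funext x
        dsimp only
        rw [dif_pos x.2]
    rw [hbij, Fintype.card_fun, Fintype.card_coe, Fintype.card_fin]
  calc k ^ (vbl e).card = S₀.card := hcardS₀.symm
    _ ≤ _ := Finset.card_le_card hsub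

private lemma numeric_lll (q t K : ℕ) (h1 : 2 * (q + 1) ≤ K) (h2 : 2 * t ≤ q + 1) :
    (q + 1) ^ (t + 1) ≤ K * q ^ t := by
  have hQ : (0 : ℝ) < (q : ℝ) + 1 := by positivity
  have hber : (1 : ℝ) - (t : ℝ) * (1 / ((q : ℝ) + 1)) ≤ (1 - 1 / ((q : ℝ) + 1)) ^ t := by
    have h := one_add_mul_le_pow (a := -(1 / ((q : ℝ) + 1)))
      (by
        have : (1 : ℝ) / ((q : ℝ) + 1) ≤ 1 := by
          rw [div_le_one hQ]; linarith
        linarith) t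
    calc (1 : ℝ) - (t : ℝ) * (1 / ((q : ℝ) + 1)) = 1 + (t : ℝ) * (-(1 / ((q : ℝ) + 1))) := by ring
      _ ≤ (1 + -(1 / ((q : ℝ) + 1))) ^ t := h
      _ = (1 - 1 / ((q : ℝ) + 1)) ^ t := by ring_nf
  have hhalf : (1 : ℝ) / 2 ≤ 1 - (t : ℝ) * (1 / ((q : ℝ) + 1)) := by
    have h2' : (t : ℝ) * 2 ≤ (q : ℝ) + 1 := by exact_mod_cast (by omega : t * 2 ≤ q + 1)
    have : (t : ℝ) * (1 / ((q : ℝ) + 1)) ≤ 1 / 2 := by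
      rw [mul_one_div, div_le_div_iff₀ hQ (by norm_num : (0:ℝ) < 2)]
      linarith
    linarith
  have hq_eq : (q : ℝ) = ((q : ℝ) + 1) * (1 - 1 / ((q : ℝ) + 1)) := by
    field_simp
    ring
  have hqt : ((q : ℝ) + 1) ^ t * (1 / 2) ≤ (q : ℝ) ^ t := by
    calc ((q : ℝ) + 1) ^ t * (1 / 2)
        ≤ ((q : ℝ) + 1) ^ t * ((1 - 1 / ((q : ℝ) + 1)) ^ t) := by
          apply mul_le_mul_of_nonneg_left (le_trans hhalf hber) (pow_nonneg hQ.le t)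
      _ = ((q : ℝ) ^ t) := by rw [← mul_pow, ← hq_eq]
  have hfin : ((q : ℝ) + 1) ^ (t + 1) ≤ (K : ℝ) * (q : ℝ) ^ t := by
    have h1' : (2 : ℝ) * ((q : ℝ) + 1) ≤ (K : ℝ) := by exact_mod_cast h1
    calc ((q : ℝ) + 1) ^ (t + 1) = (2 * ((q : ℝ) + 1)) * (((q : ℝ) + 1) ^ t * (1 / 2)) := by ring
      _ ≤ (K : ℝ) * ((q : ℝ) ^ t) := by
          apply mul_le_mul h1' hqt (by positivity) (by positivity)
  exact_mod_cast hfin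

private lemma step_insert {n k : ℕ} {q : ℕ} {G : Finset (Finset (Fin n × Fin k))}
    {a : Finset (Fin n × Fin k)}
    (hyp : (q + 1) * ((avoid G).filter (Bad a)).card ≤ (avoid G).card) :
    q * (avoid G).card ≤ (q + 1) * (avoid (insert a G)).card := by
  have hsplit := avoid_split a G
  set X := ((avoid G).filter (Bad a)).card
  set Y := (avoid (insert a G)).card
  have hZ : (avoid G).card = X + Y := hsplit.symm
  rw [hZ] at hyp ⊢
  have h1 : q * X ≤ Y := by nlinarith
  nlinarith

private lemma main_claim {n k q : ℕ} (hq : 1 ≤ q)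
    (H : Finset (Finset (Fin n × Fin k)))
    (hpart : ∀ e ∈ H, ∀ i : Fin n, (e.filter (fun v => v.1 = i)).card ≤ 1)
    (hdeg : ∀ e ∈ H, 2 * (H.filter fun e' => ¬ Disjoint (vbl e') (vbl e)).card ≤ q + 1)
    (hK : ∀ e ∈ H, 2 * (q + 1) ≤ k ^ (vbl e).card) :
    ∀ m : ℕ, ∀ F ⊆ H, F.card ≤ m → ∀ e ∈ H,
      (q + 1) * ((avoid F).filter (Bad e)).card ≤ (avoid F).card := by
  classical
  intro m
  induction m using Nat.strong_induction_on with
  | _ m IH =>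
    intro F hFH hFm e he
    set N := F.filter (fun e' => ¬ Disjoint (vbl e') (vbl e)) with hNdef
    set M := F.filter (fun e' => Disjoint (vbl e') (vbl e)) with hMdef
    have hchain : ∀ N' ⊆ N,
        q ^ N'.card * (avoid M).card ≤ (q + 1) ^ N'.card * (avoid (M ∪ N')).card := by
      intro N'
      induction N' using Finset.induction_on with
      | empty => intro _; simp
      | @insert a N' ha ih =>
        intro hsub
        have haN : a ∈ N := hsub (Finset.mem_insert_self _ _)
        have hN'sub : N' ⊆ N := fun x hx => hsub (Finset.mem_insert_of_mem hx)
        have ihh := ih hN'sub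
        have haF : a ∈ F := Finset.filter_subset _ _ haN
        have haH : a ∈ H := hFH haF
        have hGF : M ∪ N' ⊆ F :=
          Finset.union_subset (Finset.filter_subset _ _)
            (hN'sub.trans (Finset.filter_subset _ _))
        have haG : a ∉ M ∪ N' := by
          intro hmem
          rcases Finset.mem_union.1 hmem with h | h
          · exact (Finset.mem_filter.1 haN).2 ((Finset.mem_filter.1 h).2)
          · exact ha h
        have hGcard : (M ∪ N').card < m := by
          have h1 : insert a (M ∪ N') ⊆ F := Finset.insert_subset haF hGF
          have h2 := Finset.card_le_card h1
          rw [Finset.card_insert_of_notMem haG] at h2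
          omega
        have hmain := IH (M ∪ N').card hGcard (M ∪ N')
          (hGF.trans hFH) le_rfl a haH
        have hstep := step_insert (a := a) (G := M ∪ N') (q := q) hmain
        rw [Finset.card_insert_of_notMem ha, Finset.union_insert]
        calc q ^ (N'.card + 1) * (avoid M).card
            = q * (q ^ N'.card * (avoid M).card) := by ring
          _ ≤ q * ((q + 1) ^ N'.card * (avoid (M ∪ N')).card) := Nat.mul_le_mul le_rfl ihh
          _ = (q + 1) ^ N'.card * (q * (avoid (M ∪ N')).card) := by ring
          _ ≤ (q + 1) ^ N'.card * ((q + 1) * (avoid (insert a (M ∪ N'))).card) :=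
              Nat.mul_le_mul le_rfl hstep
          _ = (q + 1) ^ (N'.card + 1) * (avoid (insert a (M ∪ N'))).card := by ring
    have hMuN : M ∪ N = F := Finset.filter_union_filter_not_eq _ F
    have hchainF := hchain N Finset.Subset.rfl
    rw [hMuN] at hchainF
    have hstep2 := step2 e (hpart e he) M (fun e' he' => (Finset.mem_filter.1 he').2)
    have hmono : ((avoid F).filter (Bad e)).card ≤ ((avoid M).filter (Bad e)).card := by
      apply Finset.card_le_card
      apply Finset.filter_subset_filter
      exact avoid_anti (Finset.filter_subset _ _)
    have ht : 2 * N.card ≤ q + 1 := by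
      refine le_trans ?_ (hdeg e he)
      have : N ⊆ H.filter (fun e' => ¬ Disjoint (vbl e') (vbl e)) := by
        rw [hNdef]
        exact Finset.filter_subset_filter _ hFH
      exact Nat.mul_le_mul le_rfl (Finset.card_le_card this)
    have hnum : (q + 1) ^ (N.card + 1) ≤ k ^ (vbl e).card * q ^ N.card :=
      numeric_lll q N.card _ (hK e he) ht
    set K' := k ^ (vbl e).card with hK'def
    have hK'pos : 0 < K' := by
      have := hK e he
      omega
    have hqtpos : 0 < q ^ N.card := Nat.pow_pos hq
    refine Nat.le_of_mul_le_mul_left ?_ (Nat.mul_pos hK'pos hqtpos)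
    calc K' * q ^ N.card * ((q + 1) * ((avoid F).filter (Bad e)).card)
        = (q + 1) * q ^ N.card * (K' * ((avoid F).filter (Bad e)).card) := by ring
      _ ≤ (q + 1) * q ^ N.card * (avoid M).card := by
          apply Nat.mul_le_mul le_rfl
          exact le_trans (Nat.mul_le_mul le_rfl hmono) hstep2
      _ = (q + 1) * (q ^ N.card * (avoid M).card) := by ring
      _ ≤ (q + 1) * ((q + 1) ^ N.card * (avoid F).card) := Nat.mul_le_mul le_rfl hchainF
      _ = (q + 1) ^ (N.card + 1) * (avoid F).card := by ring
      _ ≤ K' * q ^ N.card * (avoid F).card := Nat.mul_le_mul hnum le_rfl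

private lemma core_lll {n k q : ℕ} (hk : 1 ≤ k) (hq : 1 ≤ q)
    (H : Finset (Finset (Fin n × Fin k)))
    (hpart : ∀ e ∈ H, ∀ i : Fin n, (e.filter (fun v => v.1 = i)).card ≤ 1)
    (hdeg : ∀ e ∈ H, 2 * (H.filter fun e' => ¬ Disjoint (vbl e') (vbl e)).card ≤ q + 1)
    (hK : ∀ e ∈ H, 2 * (q + 1) ≤ k ^ (vbl e).card) :
    ∃ f : Fin n → Fin k, ∀ e ∈ H, ¬ Bad e f := by
  classical
  have hmain := main_claim hq H hpart hdeg hK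
  have hfinal : ∀ G ⊆ H, q ^ G.card * k ^ n ≤ (q + 1) ^ G.card * (avoid G).card := by
    intro G
    induction G using Finset.induction_on with
    | empty => intro _; simp [card_avoid_empty]
    | @insert a G ha ih =>
      intro hsub
      have haH : a ∈ H := hsub (Finset.mem_insert_self _ _)
      have hGsub : G ⊆ H := fun x hx => hsub (Finset.mem_insert_of_mem hx)
      have ihh := ih hGsub
      have hmainG := hmain G.card G hGsub le_rfl a haH
      have hstep := step_insert (a := a) (G := G) (q := q) hmainG
      rw [Finset.card_insert_of_notMem ha]
      calc q ^ (G.card + 1) * k ^ n = q * (q ^ G.card * k ^ n) := by ring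
        _ ≤ q * ((q + 1) ^ G.card * (avoid G).card) := Nat.mul_le_mul le_rfl ihh
        _ = (q + 1) ^ G.card * (q * (avoid G).card) := by ring
        _ ≤ (q + 1) ^ G.card * ((q + 1) * (avoid (insert a G)).card) :=
            Nat.mul_le_mul le_rfl hstep
        _ = (q + 1) ^ (G.card + 1) * (avoid (insert a G)).card := by ring
  have hH := hfinal H Finset.Subset.rfl
  have hpos : 0 < q ^ H.card * k ^ n :=
    Nat.mul_pos (Nat.pow_pos hq) (Nat.pow_pos hk)
  have : 0 < (avoid H).card := by
    by_contra h
    push_neg at h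
    interval_cases h' : (avoid H).card
    · omega
  obtain ⟨f, hf⟩ := Finset.card_pos.1 this
  exact ⟨f, mem_avoid.1 hf⟩

/-- `f(k,r,s) = Ω_r((k^r/s)^{1/(r-1)})`: for every `r ≥ 2` there is `c_r > 0` such that if
`n ≤ c_r·(k^r/s)^{1/(r-1)}`, then every `n`-partite `r`-uniform hypergraph with parts of
size `k` (taken as the columns of `Fin n × Fin k`) in which any `r` parts induce exactly
`s` edges forming a matching has an independent transversal. -/
theorem stmt8 : ∀ r : ℕ, 2 ≤ r → ∃ c : ℝ, 0 < c ∧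
    ∀ k s n : ℕ, 2 ≤ k → 1 ≤ s → s ≤ k ^ r →
    (n : ℝ) ≤ c * (((k : ℝ) ^ r) / s) ^ ((1 : ℝ) / ((r : ℝ) - 1)) →
    ∀ H : Finset (Finset (Fin n × Fin k)),
      (∀ e ∈ H, e.card = r) →
      (∀ e ∈ H, ∀ i : Fin n, (e.filter (fun v => v.1 = i)).card ≤ 1) →
      (∀ A : Finset (Fin n), A.card = r →
        (H.filter (fun e => ∀ v ∈ e, v.1 ∈ A)).card = s ∧
        ∀ e ∈ H, ∀ e' ∈ H, (∀ v ∈ e, v.1 ∈ A) → (∀ v ∈ e', v.1 ∈ A) →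
          e ≠ e' → Disjoint e e') →
      ∃ f : Fin n → Fin k, ∀ e ∈ H, ¬ e ⊆ Finset.univ.image (fun i => (i, f i)) := by
  intro r hr
  have hrR : (2 : ℝ) ≤ (r : ℝ) := by exact_mod_cast hr
  have hr1 : (0 : ℝ) < (r : ℝ) - 1 := by linarith
  have h8r : (0 : ℝ) < 8 * (r : ℝ) := by linarith
  refine ⟨((8 : ℝ) * r)⁻¹ ^ ((1 : ℝ) / ((r : ℝ) - 1)), ?_, ?_⟩
  · exact Real.rpow_pos_of_pos (inv_pos.2 h8r) _
  intro k s n hk hs hsk hn H hcard hpart hA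
  classical
  -- the key numeric consequence : 8 * r * s * n^(r-1) ≤ k^r (in ℕ)
  have hkR : (0 : ℝ) < (k : ℝ) := by exact_mod_cast lt_of_lt_of_le two_pos hk
  have hsR : (0 : ℝ) < (s : ℝ) := by exact_mod_cast hs
  have hX : (0 : ℝ) < ((k : ℝ) ^ r) / s := div_pos (pow_pos hkR r) hsR
  have hnn : (0 : ℝ) ≤ (n : ℝ) := Nat.cast_nonneg n
  have h1 : ((n : ℝ)) ^ ((r : ℝ) - 1) ≤ ((8 : ℝ) * r)⁻¹ * (((k : ℝ) ^ r) / s) := by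
    have hmono := Real.rpow_le_rpow hnn hn (le_of_lt hr1)
    calc ((n : ℝ)) ^ ((r : ℝ) - 1)
        ≤ (((8 : ℝ) * r)⁻¹ ^ ((1 : ℝ) / ((r : ℝ) - 1)) *
            (((k : ℝ) ^ r) / s) ^ ((1 : ℝ) / ((r : ℝ) - 1))) ^ ((r : ℝ) - 1) := hmono
      _ = ((((8 : ℝ) * r)⁻¹ * (((k : ℝ) ^ r) / s)) ^ ((1 : ℝ) / ((r : ℝ) - 1))) ^ ((r : ℝ) - 1) := by
          rw [Real.mul_rpow (inv_nonneg.2 h8r.le) hX.le]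
      _ = (((8 : ℝ) * r)⁻¹ * (((k : ℝ) ^ r) / s)) ^ (((1 : ℝ) / ((r : ℝ) - 1)) * ((r : ℝ) - 1)) := by
          rw [← Real.rpow_mul (by positivity)]
      _ = ((8 : ℝ) * r)⁻¹ * (((k : ℝ) ^ r) / s) := by
          rw [one_div_mul_cancel hr1.ne', Real.rpow_one]
  have h2 : 8 * (r : ℝ) * s * (n : ℝ) ^ ((r : ℝ) - 1) ≤ (k : ℝ) ^ r := by
    have hpos : (0 : ℝ) ≤ 8 * (r : ℝ) * s := by positivity
    calc 8 * (r : ℝ) * s * (n : ℝ) ^ ((r : ℝ) - 1)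
        ≤ 8 * (r : ℝ) * s * (((8 : ℝ) * r)⁻¹ * (((k : ℝ) ^ r) / s)) :=
          mul_le_mul_of_nonneg_left h1 hpos
      _ = (k : ℝ) ^ r := by field_simp
  have hexp : ((r : ℝ) - 1) = ((r - 1 : ℕ) : ℝ) := by
    have : ((r - 1 : ℕ) : ℝ) = (r : ℝ) - 1 := by
      push_cast [Nat.cast_sub (by omega : 1 ≤ r)]
      ring
    rw [this]
  rw [hexp, Real.rpow_natCast] at h2
  have hkr : 8 * r * s * n ^ (r - 1) ≤ k ^ r := by
    have : ((8 * r * s * n ^ (r - 1) : ℕ) : ℝ) ≤ ((k ^ r : ℕ) : ℝ) := by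
      push_cast
      calc (8 : ℝ) * r * s * (n : ℝ) ^ (r - 1) = 8 * (r : ℝ) * s * (n : ℝ) ^ (r - 1) := by ring
        _ ≤ (k : ℝ) ^ r := h2
    exact_mod_cast this
  -- dispose of the case n = 0
  rcases Nat.eq_zero_or_pos n with rfl | hn1
  · refine ⟨fun i => i.elim0, fun e he hsub => ?_⟩
    have hec : e.card = r := hcard e he
    have hpos : 0 < e.card := by omega
    obtain ⟨v, hv⟩ := Finset.card_pos.1 hpos
    exact v.1.elim0
  -- vbl has card r on H
  have hvbl : ∀ e ∈ H, (vbl e).card = r := by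
    intro e he
    have hinj : Set.InjOn Prod.fst (e : Set (Fin n × Fin k)) := by
      intro v hv w hw hvw
      have h1 : v ∈ e.filter (fun x => x.1 = v.1) := Finset.mem_filter.2 ⟨hv, rfl⟩
      have h2 : w ∈ e.filter (fun x => x.1 = v.1) := Finset.mem_filter.2 ⟨hw, hvw.symm⟩
      exact Finset.card_le_one.1 (hpart e he v.1) _ h1 _ h2
    rw [vbl, Finset.card_image_of_injOn hinj, hcard e he]
  -- column degree bound
  set C := Nat.choose (n - 1) (r - 1) with hCdef
  have hcol : ∀ i : Fin n, (H.filter (fun e' => i ∈ vbl e')).card ≤ s * C := by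
    intro i
    set B := H.filter (fun e' => i ∈ vbl e') with hBdef
    have hBH : B ⊆ H := Finset.filter_subset _ _
    have h1 : B.card ≤ s * (B.image vbl).card := by
      apply Finset.card_le_mul_card_image
      intro A hA'
      obtain ⟨e₀, he₀B, he₀A⟩ := Finset.mem_image.1 hA'
      have hAr : A.card = r := by rw [← he₀A]; exact hvbl e₀ (hBH he₀B)
      have hAs := (hA A hAr).1
      refine le_trans (Finset.card_le_card ?_) hAs.le
      intro e'' he''
      obtain ⟨he''B, he''A⟩ := Finset.mem_filter.1 he''
      refine Finset.mem_filter.2 ⟨hBH he''B, fun v hv => ?_⟩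
      rw [← he''A]
      exact Finset.mem_image.2 ⟨v, hv, rfl⟩
    have h2 : (B.image vbl).card ≤ C := by
      have hm : ∀ A ∈ B.image vbl, i ∈ A ∧ A.card = r := by
        intro A hA'
        obtain ⟨e₀, he₀B, he₀A⟩ := Finset.mem_image.1 hA'
        refine ⟨?_, by rw [← he₀A]; exact hvbl e₀ (hBH he₀B)⟩
        rw [← he₀A]
        exact (Finset.mem_filter.1 he₀B).2
      have hinj2 : Set.InjOn (fun A : Finset (Fin n) => A.erase i) ↑(B.image vbl) := by
        intro A hA' A' hA'' hEq
        have h1' := (hm A (by exact_mod_cast hA')).1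
        have h2' := (hm A' (by exact_mod_cast hA'')).1
        rw [← Finset.insert_erase h1', ← Finset.insert_erase h2']
        simp only at hEq
        rw [hEq]
      have hmaps : ∀ A ∈ B.image vbl, A.erase i ∈ (univ.erase i).powersetCard (r - 1) := by
        intro A hA'
        refine Finset.mem_powersetCard.2 ⟨Finset.erase_subset_erase i (Finset.subset_univ A), ?_⟩
        rw [Finset.card_erase_of_mem (hm A hA').1, (hm A hA').2]
      calc (B.image vbl).card ≤ ((univ.erase i).powersetCard (r - 1)).card :=
            Finset.card_le_card_of_injOn _ hmaps hinj2
        _ = C := by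
            rw [Finset.card_powersetCard, Finset.card_erase_of_mem (Finset.mem_univ i),
              Finset.card_univ, Fintype.card_fin]
    exact h1.trans (Nat.mul_le_mul le_rfl h2)
  have hdeg0 : ∀ e ∈ H, (H.filter (fun e' => ¬ Disjoint (vbl e') (vbl e))).card ≤ r * (s * C) := by
    intro e he
    have hsub : (H.filter fun e' => ¬ Disjoint (vbl e') (vbl e)) ⊆
        (vbl e).biUnion (fun i => H.filter fun e' => i ∈ vbl e') := by
      intro e' he'
      obtain ⟨he'H, hnd⟩ := Finset.mem_filter.1 he'
      obtain ⟨i, hi1, hi2⟩ := Finset.not_disjoint_iff.1 hnd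
      exact Finset.mem_biUnion.2 ⟨i, hi2, Finset.mem_filter.2 ⟨he'H, hi1⟩⟩
    calc (H.filter fun e' => ¬ Disjoint (vbl e') (vbl e)).card
        ≤ ((vbl e).biUnion (fun i => H.filter fun e' => i ∈ vbl e')).card :=
          Finset.card_le_card hsub
      _ ≤ ∑ i ∈ vbl e, (H.filter fun e' => i ∈ vbl e').card := Finset.card_biUnion_le
      _ ≤ ∑ _i ∈ vbl e, s * C := Finset.sum_le_sum (fun i _ => hcol i)
      _ = r * (s * C) := by rw [Finset.sum_const, hvbl e he, smul_eq_mul]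
  -- set up q
  set D := r * s * C + 1 with hDdef
  set q := 2 * D - 1 with hqdef
  have hq2 : q + 1 = 2 * D := by omega
  have hq1 : 1 ≤ q := by omega
  have hCn : C ≤ n ^ (r - 1) := by
    calc C ≤ (n - 1) ^ (r - 1) := Nat.choose_le_pow _ _
      _ ≤ n ^ (r - 1) := Nat.pow_le_pow_left (by omega) _
  have hn_pow : 1 ≤ n ^ (r - 1) := Nat.one_le_pow _ _ hn1
  have hbig : 4 * D ≤ k ^ r := by
    have t1 : r * s * C ≤ r * s * n ^ (r - 1) := Nat.mul_le_mul le_rfl hCn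
    have t2 : 1 ≤ r * s * n ^ (r - 1) :=
      Nat.one_le_iff_ne_zero.2 (by positivity)
    have t3 : 8 * r * s * n ^ (r - 1) = 8 * (r * s * n ^ (r - 1)) := by ring
    have t4 : 4 * D = 4 * (r * s * C) + 4 := by rw [hDdef]; ring
    omega
  -- apply the core lemma
  have hdeg : ∀ e ∈ H, 2 * (H.filter fun e' => ¬ Disjoint (vbl e') (vbl e)).card ≤ q + 1 := by
    intro e he
    rw [hq2]
    have t1 : 2 * (H.filter fun e' => ¬ Disjoint (vbl e') (vbl e)).card ≤ 2 * (r * (s * C)) :=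
      Nat.mul_le_mul le_rfl (hdeg0 e he)
    have t2 : r * (s * C) ≤ D := by rw [hDdef, ← mul_assoc]; exact Nat.le_succ _
    exact le_trans t1 (Nat.mul_le_mul le_rfl t2)
  have hK : ∀ e ∈ H, 2 * (q + 1) ≤ k ^ (vbl e).card := by
    intro e he
    rw [hq2, hvbl e he]
    omega
  obtain ⟨f, hf⟩ := core_lll (by omega : 1 ≤ k) hq1 H hpart hdeg hK
  refine ⟨f, fun e he hsub => hf e he ?_⟩
  intro v hv
  have := hsub hv
  obtain ⟨i, _, hi⟩ := Finset.mem_image.1 this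
  have h1 : i = v.1 := congrArg Prod.fst hi
  have h2 : f i = v.2 := congrArg Prod.snd hi
  rw [← h1]; exact h2
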